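/- For nonzero integers r₁, s₁, r₂, s₂, integers x₁, y₁, x₂, y₂ and positive integers D₁, D₂, the normalized Fourier transform Ŝ_{r₁,s₁,r₂,s₂}(x₁,y₁,x₂,y₂; D₁,D₂) of the long-element GL(3) Kloosterman sum satisfies |Ŝ_{r₁,s₁,r₂,s₂}(x₁,y₁,x₂,y₂; D₁,D₂)| ≤ gcd(r₁,D₁)·gcd(r₂,D₂)·gcd(D₁,D₂). -/

import Mathlib

open scoped BigOperators

/-- e(x) = exp(2πix). -/
noncomputable def e (x : ℝ) : ℂ := Complex.exp (2 * Real.pi * Complex.I * x)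

/-- A choice of a pair `(Y, Z)` with `Y·b + Z·c ≡ 1 (mod D)`, when one exists. -/
noncomputable def YZ (D : ℕ) (b c : ℤ) : ℤ × ℤ :=
  letI := Classical.propDecidable (∃ p : ℤ × ℤ, p.1 * b + p.2 * c ≡ 1 [ZMOD (D : ℤ)])
  if h : ∃ p : ℤ × ℤ, p.1 * b + p.2 * c ≡ 1 [ZMOD (D : ℤ)] then h.choose else (0, 0)

/-- The long Weyl element GL(3) Kloosterman sum
`S(n₁,m₂,m₁,n₂;D₁,D₂) = ∑ e((n₁B₁ + m₁(Y₁D₂ − Z₁B₂))/D₁ + (m₂B₂ + n₂(Y₂D₁ − Z₂B₁))/D₂)`,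
where the sum runs over `B₁,C₁ mod D₁` and `B₂,C₂ mod D₂` with `gcd(B_j,C_j,D_j)=1` and
`D₁C₂ + B₁B₂ + D₂C₁ ≡ 0 mod D₁D₂`, and `Y_jB_j + Z_jC_j ≡ 1 mod D_j`. -/
noncomputable def SKl (n₁ m₂ m₁ n₂ : ℤ) (D₁ D₂ : ℕ) : ℂ :=
  ∑ b₁ ∈ Finset.range D₁, ∑ c₁ ∈ Finset.range D₁,
    ∑ b₂ ∈ Finset.range D₂, ∑ c₂ ∈ Finset.range D₂,
      if Nat.gcd (Nat.gcd b₁ c₁) D₁ = 1 ∧ Nat.gcd (Nat.gcd b₂ c₂) D₂ = 1 ∧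
          (D₁ : ℤ) * c₂ + (b₁ : ℤ) * b₂ + (D₂ : ℤ) * c₁ ≡ 0 [ZMOD ((D₁ : ℤ) * D₂)] then
        e ((((n₁ * b₁ + m₁ * ((YZ D₁ (b₁ : ℤ) (c₁ : ℤ)).1 * D₂
                - (YZ D₁ (b₁ : ℤ) (c₁ : ℤ)).2 * b₂) : ℤ)) : ℝ) / (D₁ : ℝ)
          + (((m₂ * b₂ + n₂ * ((YZ D₂ (b₂ : ℤ) (c₂ : ℤ)).1 * D₁
                - (YZ D₂ (b₂ : ℤ) (c₂ : ℤ)).2 * b₁) : ℤ)) : ℝ) / (D₂ : ℝ))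
      else 0

/-- The normalized Fourier transform of the long Weyl element Kloosterman sum:
`Ŝ_{r₁,s₁,r₂,s₂}(x₁,y₁,x₂,y₂;D₁,D₂) = (1/(D₁²D₂²)) ∑_{n₁,m₁ mod D₁} ∑_{n₂,m₂ mod D₂}
  S(n₁r₁, m₂r₂, m₁s₁, n₂s₂; D₁,D₂) e(−(x₁m₁+y₁n₁)/D₁ − (x₂m₂+y₂n₂)/D₂)`. -/
noncomputable def Shat (r₁ s₁ r₂ s₂ x₁ y₁ x₂ y₂ : ℤ) (D₁ D₂ : ℕ) : ℂ :=
  (1 / ((D₁ : ℂ) ^ 2 * (D₂ : ℂ) ^ 2)) *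
    ∑ n₁ ∈ Finset.range D₁, ∑ m₁ ∈ Finset.range D₁,
      ∑ n₂ ∈ Finset.range D₂, ∑ m₂ ∈ Finset.range D₂,
        SKl ((n₁ : ℤ) * r₁) ((m₂ : ℤ) * r₂) ((m₁ : ℤ) * s₁) ((n₂ : ℤ) * s₂) D₁ D₂ *
          e (-(((x₁ * (m₁ : ℤ) + y₁ * (n₁ : ℤ) : ℤ) : ℝ) / (D₁ : ℝ))
            - ((x₂ * (m₂ : ℤ) + y₂ * (n₂ : ℤ) : ℤ) : ℝ) / (D₂ : ℝ))



lemma e_add (x y : ℝ) : e (x + y) = e x * e y := by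
  simp only [e, ← Complex.exp_add]
  congr 1
  push_cast
  ring

lemma e_int (a : ℤ) : e a = 1 := by
  unfold e
  rw [show (2 * (Real.pi:ℂ) * Complex.I * ((a:ℝ):ℂ)) = (a:ℤ) * (2 * Real.pi * Complex.I) by
    push_cast; ring]
  exact Complex.exp_int_mul_two_pi_mul_I a

lemma e_nat_mul (n : ℕ) (x : ℝ) : e (n * x) = e x ^ n := by
  unfold e
  rw [show (2 * (Real.pi:ℂ) * Complex.I * (((n:ℝ) * x : ℝ):ℂ)) = (n:ℂ) * (2 * Real.pi * Complex.I * x) by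
    push_cast; ring]
  exact Complex.exp_nat_mul _ n

lemma sum_e (D : ℕ) (hD : 0 < D) (A : ℤ) :
    ∑ n ∈ Finset.range D, e ((((n : ℤ) * A : ℤ) : ℝ) / (D : ℝ)) =
      if (D : ℤ) ∣ A then (D : ℂ) else 0 := by
  have hD' : (D : ℝ) ≠ 0 := by positivity
  have hz : ∀ n : ℕ, e ((((n : ℤ) * A : ℤ) : ℝ) / (D : ℝ)) = e ((A : ℝ) / D) ^ n := by
    intro n
    rw [show ((((n : ℤ) * A : ℤ) : ℝ) / (D : ℝ)) = (n : ℝ) * ((A : ℝ) / D) by push_cast; ring]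
    exact e_nat_mul n _
  simp only [hz]
  split_ifs with h
  · obtain ⟨k, rfl⟩ := h
    have h1 : e (((D : ℤ) * k : ℝ) / D) = 1 := by
      rw [show (((D : ℤ) * k : ℝ) / D) = ((k : ℤ) : ℝ) by push_cast; field_simp]
      exact e_int k
    push_cast at h1 ⊢
    simp [h1]
  · have hz1 : e ((A : ℝ) / D) ≠ 1 := by
      intro hz1
      apply h
      unfold e at hz1
      rw [Complex.exp_eq_one_iff] at hz1
      obtain ⟨k, hk⟩ := hz1
      have hπ : (2 * (Real.pi : ℂ) * Complex.I) ≠ 0 := by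
        simp [Real.pi_ne_zero, Complex.I_ne_zero]
      have hAD : (((A : ℝ) / D : ℝ) : ℂ) = (k : ℂ) := by
        have : (2 * (Real.pi:ℂ) * Complex.I) * (((A : ℝ) / D : ℝ) : ℂ)
            = (2 * (Real.pi:ℂ) * Complex.I) * (k : ℂ) := by rw [hk]; ring
        exact mul_left_cancel₀ hπ this
      have hAD' : (A : ℝ) / D = (k : ℝ) := by
        have := hAD
        rw [show ((k:ℤ):ℂ) = (((k:ℤ):ℝ):ℂ) by push_cast; ring] at this
        exact_mod_cast this
      have hA : (A : ℝ) = ((D : ℤ) * k : ℤ) := by push_cast; field_simp at hAD'; linarith [hAD']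
      exact ⟨k, by exact_mod_cast hA⟩
    have hzD : e ((A : ℝ) / D) ^ D = 1 := by
      rw [← e_nat_mul, show (D : ℝ) * ((A : ℝ) / D) = (A : ℝ) by field_simp]
      exact e_int A
    rw [geom_sum_eq hz1 D, hzD]
    simp

lemma card_lin (D : ℕ) (hD : 0 < D) (r y : ℤ) (hr : r ≠ 0) :
    ((Finset.range D).filter (fun b : ℕ => (D : ℤ) ∣ r * (b : ℤ) - y)).card ≤ Int.gcd r (D : ℤ) := by
  classical
  set g := Int.gcd r (D : ℤ) with hg
  have hg0 : 0 < g := Int.gcd_pos_of_ne_zero_left _ hr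
  have hgD : (g : ℤ) ∣ (D : ℤ) := Int.gcd_dvd_right _ _
  have hgr : (g : ℤ) ∣ r := Int.gcd_dvd_left _ _
  have hgDnat : g ∣ D := by exact_mod_cast hgD
  set d := D / g with hd
  have hDdg : D = d * g := (Nat.div_mul_cancel hgDnat).symm
  have hd0 : 0 < d := Nat.div_pos (Nat.le_of_dvd hD hgDnat) hg0
  have hgz : (g : ℤ) ≠ 0 := by exact_mod_cast hg0.ne'
  have hco : IsCoprime (r / (g : ℤ)) ((d : ℕ) : ℤ) := by
    rw [Int.isCoprime_iff_gcd_eq_one]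
    have hdZ : ((d : ℕ) : ℤ) = (D : ℤ) / (g : ℤ) := by
      have hDZ : (D : ℤ) = (g : ℤ) * (d : ℤ) := by rw [hDdg]; push_cast; ring
      rw [hDZ, Int.mul_ediv_cancel_left _ hgz]
    rw [hdZ]
    exact Int.gcd_div_gcd_div_gcd hg0
  rw [← Finset.card_range g]
  apply Finset.card_le_card_of_injOn (fun b => b / d) ?_ ?_
  · intro b hb
    simp only [Finset.mem_coe, Finset.mem_filter, Finset.mem_range] at hb
    simp only [Finset.mem_coe, Finset.mem_range]
    exact (Nat.div_lt_iff_lt_mul hd0).2 (by rw [mul_comm g d, ← hDdg]; exact hb.1)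
  · intro b hb b' hb' hbb
    simp only [Finset.coe_filter, Set.mem_setOf_eq, Finset.mem_range] at hb hb'
    have h1 : (D : ℤ) ∣ r * (b : ℤ) - r * (b' : ℤ) := by
      have := dvd_sub hb.2 hb'.2
      simpa using this
    have h2 : ((d : ℕ) : ℤ) ∣ (b : ℤ) - (b' : ℤ) := by
      obtain ⟨r', hr'⟩ := hgr
      have hrg : r / (g : ℤ) = r' := by rw [hr']; exact Int.mul_ediv_cancel_left _ hgz
      have hDz : (D : ℤ) = (g : ℤ) * (d : ℤ) := by rw [hDdg]; push_cast; ring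
      rw [hDz, hr'] at h1
      have h1' : (g : ℤ) * (d : ℤ) ∣ (g : ℤ) * (r' * ((b : ℤ) - b')) := by
        convert h1 using 1; ring
      have h3 : (d : ℤ) ∣ r' * ((b : ℤ) - b') := (mul_dvd_mul_iff_left hgz).1 h1'
      have hco' : IsCoprime r' ((d : ℕ) : ℤ) := hrg ▸ hco
      exact (IsCoprime.dvd_of_dvd_mul_left hco'.symm h3)
    have h9 : (b' : ℤ) ≡ (b : ℤ) [ZMOD (d : ℤ)] := Int.modEq_iff_dvd.2 (by simpa using h2)
    have h9' : (b' : ℤ) % (d : ℤ) = (b : ℤ) % (d : ℤ) := h9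
    have hmod : b' % d = b % d := by
      have : ((b' % d : ℕ) : ℤ) = ((b % d : ℕ) : ℤ) := by push_cast; exact h9'
      exact_mod_cast this
    have hbb' : b / d = b' / d := hbb
    calc b = d * (b / d) + b % d := (Nat.div_add_mod b d).symm
      _ = d * (b' / d) + b' % d := by rw [hbb', hmod]
      _ = b' := Nat.div_add_mod b' d

lemma card_pair (D₁ D₂ : ℕ) (h₁ : 0 < D₁) (h₂ : 0 < D₂) (t : ℤ) :
    (((Finset.range D₁) ×ˢ (Finset.range D₂)).filter
        (fun p => (D₁ : ℤ) * (p.2 : ℤ) + t + (D₂ : ℤ) * (p.1 : ℤ) ≡ 0 [ZMOD ((D₁ : ℤ) * (D₂ : ℤ))])).card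
      ≤ Nat.gcd D₁ D₂ := by
  classical
  set g := Nat.gcd D₁ D₂ with hg
  have hg0 : 0 < g := Nat.gcd_pos_of_pos_left _ h₁
  have hgD : g ∣ D₁ := Nat.gcd_dvd_left _ _
  set d := D₁ / g with hd
  have hDdg : D₁ = d * g := (Nat.div_mul_cancel hgD).symm
  have hd0 : 0 < d := Nat.div_pos (Nat.le_of_dvd h₁ hgD) hg0
  have hco : Nat.Coprime d (D₂ / g) := Nat.coprime_div_gcd_div_gcd hg0
  rw [← Finset.card_range g]
  apply Finset.card_le_card_of_injOn (fun p => p.1 / d) ?_ ?_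
  · intro p hp
    simp only [Finset.mem_coe, Finset.mem_filter, Finset.mem_product, Finset.mem_range] at hp
    simp only [Finset.mem_coe, Finset.mem_range]
    exact (Nat.div_lt_iff_lt_mul hd0).2 (by rw [mul_comm g d, ← hDdg]; exact hp.1.1)
  · intro p hp q hq hpq
    simp only [Finset.coe_filter, Set.mem_setOf_eq, Finset.mem_product, Finset.mem_range] at hp hq
    have hdvd : ((D₁ : ℤ) * D₂) ∣
        ((D₁:ℤ) * p.2 + t + (D₂:ℤ) * p.1) - ((D₁:ℤ) * q.2 + t + (D₂:ℤ) * q.1) :=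
      Int.modEq_zero_iff_dvd.1 (by simpa using (Int.ModEq.sub hp.2 hq.2))
    have hD₁dvd : (D₁ : ℤ) ∣ (D₂ : ℤ) * ((p.1 : ℤ) - q.1) := by
      have h0 : (D₁ : ℤ) ∣ ((D₁:ℤ) * p.2 + t + (D₂:ℤ) * p.1) - ((D₁:ℤ) * q.2 + t + (D₂:ℤ) * q.1) :=
        dvd_trans ⟨(D₂ : ℤ), rfl⟩ hdvd
      have h3 : (D₁ : ℤ) ∣ (D₁:ℤ) * ((p.2:ℤ) - q.2) + (D₂ : ℤ) * ((p.1:ℤ) - q.1) := by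
        convert h0 using 1; ring
      have h4 := dvd_sub h3 (Dvd.intro ((p.2:ℤ) - q.2) (mul_comm _ _))
      have : (D₁:ℤ) * ((p.2:ℤ) - q.2) + (D₂:ℤ) * ((p.1:ℤ) - q.1) - (D₁:ℤ) * ((p.2:ℤ) - q.2)
          = (D₂:ℤ) * ((p.1:ℤ) - q.1) := by ring
      rw [show ((p.2:ℤ) - q.2) * (D₁:ℤ) = (D₁:ℤ) * ((p.2:ℤ) - q.2) from mul_comm _ _, this] at h4
      exact h4
    have hddvd : ((d : ℕ) : ℤ) ∣ (p.1 : ℤ) - q.1 := by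
      set e₂ := D₂ / g with he₂
      have hD₂nat : D₂ = g * e₂ := (Nat.mul_div_cancel' (Nat.gcd_dvd_right D₁ D₂)).symm
      have hD₂ : (D₂ : ℤ) = (g : ℤ) * (e₂ : ℤ) := by exact_mod_cast hD₂nat
      have hD₁Z : (D₁ : ℤ) = (g : ℤ) * (d : ℤ) := by rw [hDdg]; push_cast; ring
      rw [hD₁Z, hD₂] at hD₁dvd
      have hgz : (g : ℤ) ≠ 0 := by exact_mod_cast hg0.ne'
      have h5 : (d : ℤ) ∣ (e₂ : ℤ) * ((p.1 : ℤ) - q.1) := by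
        refine (mul_dvd_mul_iff_left hgz).1 ?_
        rw [← mul_assoc]; exact hD₁dvd
      have hcoZ : IsCoprime ((e₂ : ℕ) : ℤ) ((d : ℕ) : ℤ) := by
        rw [Int.isCoprime_iff_gcd_eq_one, Int.gcd_natCast_natCast]
        exact (Nat.coprime_comm.1 hco)
      exact hcoZ.symm.dvd_of_dvd_mul_left h5
    have hp1 : p.1 = q.1 := by
      have h9 : (q.1 : ℤ) ≡ (p.1 : ℤ) [ZMOD (d : ℤ)] := Int.modEq_iff_dvd.2 (by simpa using hddvd)
      have h9' : (q.1 : ℤ) % (d : ℤ) = (p.1 : ℤ) % (d : ℤ) := h9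
      have hmod : q.1 % d = p.1 % d := by
        have : ((q.1 % d : ℕ) : ℤ) = ((p.1 % d : ℕ) : ℤ) := by push_cast; exact h9'
        exact_mod_cast this
      have hpq' : p.1 / d = q.1 / d := hpq
      calc p.1 = d * (p.1 / d) + p.1 % d := (Nat.div_add_mod p.1 d).symm
        _ = d * (q.1 / d) + q.1 % d := by rw [hpq', hmod]
        _ = q.1 := Nat.div_add_mod q.1 d
    have hp2 : p.2 = q.2 := by
      rw [hp1] at hdvd
      have h6 : (D₁ : ℤ) * D₂ ∣ (D₁ : ℤ) * ((p.2 : ℤ) - q.2) := by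
        convert hdvd using 1; ring
      have hD₁z : (D₁ : ℤ) ≠ 0 := by exact_mod_cast h₁.ne'
      have h7 : (D₂ : ℤ) ∣ (p.2 : ℤ) - q.2 := (mul_dvd_mul_iff_left hD₁z).1 h6
      have h9 : (q.2 : ℤ) ≡ (p.2 : ℤ) [ZMOD (D₂ : ℤ)] := Int.modEq_iff_dvd.2 (by simpa using h7)
      have h9' : (q.2 : ℤ) % (D₂ : ℤ) = (p.2 : ℤ) % (D₂ : ℤ) := h9
      have hmod : q.2 % D₂ = p.2 % D₂ := by
        have : ((q.2 % D₂ : ℕ) : ℤ) = ((p.2 % D₂ : ℕ) : ℤ) := by push_cast; exact h9'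
        exact_mod_cast this
      rw [Nat.mod_eq_of_lt hq.1.2, Nat.mod_eq_of_lt hp.1.2] at hmod
      exact hmod.symm
    exact Prod.ext hp1 hp2

lemma sum_comm5 {M : Type*} [AddCommMonoid M] (s₁ s₂ s₃ s₄ t : Finset ℕ)
    (f : ℕ → ℕ → ℕ → ℕ → ℕ → M) :
    (∑ a ∈ s₁, ∑ b ∈ s₂, ∑ c ∈ s₃, ∑ d ∈ s₄, ∑ x ∈ t, f a b c d x)
      = ∑ x ∈ t, ∑ a ∈ s₁, ∑ b ∈ s₂, ∑ c ∈ s₃, ∑ d ∈ s₄, f a b c d x :=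
  calc (∑ a ∈ s₁, ∑ b ∈ s₂, ∑ c ∈ s₃, ∑ d ∈ s₄, ∑ x ∈ t, f a b c d x)
      = ∑ a ∈ s₁, ∑ b ∈ s₂, ∑ c ∈ s₃, ∑ x ∈ t, ∑ d ∈ s₄, f a b c d x :=
        Finset.sum_congr rfl fun a _ => Finset.sum_congr rfl fun b _ =>
          Finset.sum_congr rfl fun c _ => Finset.sum_comm
    _ = ∑ a ∈ s₁, ∑ b ∈ s₂, ∑ x ∈ t, ∑ c ∈ s₃, ∑ d ∈ s₄, f a b c d x :=
        Finset.sum_congr rfl fun a _ => Finset.sum_congr rfl fun b _ => Finset.sum_comm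
    _ = ∑ a ∈ s₁, ∑ x ∈ t, ∑ b ∈ s₂, ∑ c ∈ s₃, ∑ d ∈ s₄, f a b c d x :=
        Finset.sum_congr rfl fun a _ => Finset.sum_comm
    _ = ∑ x ∈ t, ∑ a ∈ s₁, ∑ b ∈ s₂, ∑ c ∈ s₃, ∑ d ∈ s₄, f a b c d x := Finset.sum_comm

lemma sum4_factor (s₁ s₂ s₃ s₄ : Finset ℕ) (f g h k : ℕ → ℂ) :
    (∑ a ∈ s₁, ∑ b ∈ s₂, ∑ c ∈ s₃, ∑ d ∈ s₄, f a * g b * h c * k d)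
      = (∑ a ∈ s₁, f a) * (∑ b ∈ s₂, g b) * (∑ c ∈ s₃, h c) * (∑ d ∈ s₄, k d) := by
  have A : (∑ a ∈ s₁, ∑ b ∈ s₂, ∑ c ∈ s₃, ∑ d ∈ s₄, f a * g b * h c * k d)
      = ∑ a ∈ s₁, f a * (∑ b ∈ s₂, g b * (∑ c ∈ s₃, h c * (∑ d ∈ s₄, k d))) := by
    refine Finset.sum_congr rfl fun a _ => ?_
    rw [Finset.mul_sum]
    refine Finset.sum_congr rfl fun b _ => ?_
    rw [← mul_assoc, Finset.mul_sum]
    refine Finset.sum_congr rfl fun c _ => ?_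
    rw [← mul_assoc, Finset.mul_sum]
  rw [A,
    show (∑ c ∈ s₃, h c * (∑ d ∈ s₄, k d)) = (∑ c ∈ s₃, h c) * (∑ d ∈ s₄, k d) from
      (Finset.sum_mul _ _ _).symm,
    show (∑ b ∈ s₂, g b * ((∑ c ∈ s₃, h c) * (∑ d ∈ s₄, k d)))
        = (∑ b ∈ s₂, g b) * ((∑ c ∈ s₃, h c) * (∑ d ∈ s₄, k d)) from
      (Finset.sum_mul _ _ _).symm,
    show (∑ a ∈ s₁, f a * ((∑ b ∈ s₂, g b) * ((∑ c ∈ s₃, h c) * (∑ d ∈ s₄, k d))))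
        = (∑ a ∈ s₁, f a) * ((∑ b ∈ s₂, g b) * ((∑ c ∈ s₃, h c) * (∑ d ∈ s₄, k d))) from
      (Finset.sum_mul _ _ _).symm]
  ring

lemma absE (D : ℕ) (p : Prop) [Decidable p] :
    ‖(if p then (D : ℂ) else 0)‖ ≤ (D : ℝ) := by
  split_ifs <;> simp

theorem shat_general_bound (r₁ s₁ r₂ s₂ : ℤ)
    (hr₁ : r₁ ≠ 0) (hs₁ : s₁ ≠ 0) (hr₂ : r₂ ≠ 0) (hs₂ : s₂ ≠ 0)
    (x₁ y₁ x₂ y₂ : ℤ) (D₁ D₂ : ℕ) (hD₁ : 0 < D₁) (hD₂ : 0 < D₂) :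
    ‖Shat r₁ s₁ r₂ s₂ x₁ y₁ x₂ y₂ D₁ D₂‖
      ≤ (Int.gcd r₁ (D₁ : ℤ) : ℝ) * (Int.gcd r₂ (D₂ : ℤ) : ℝ) * (Nat.gcd D₁ D₂ : ℝ) := by
  classical
  have hD₁' : (D₁ : ℝ) ≠ 0 := by positivity
  have hD₂' : (D₂ : ℝ) ≠ 0 := by positivity
  -- Step 1: evaluate the Fourier transform as a sum of indicator products
  have claim1 : Shat r₁ s₁ r₂ s₂ x₁ y₁ x₂ y₂ D₁ D₂
      = (1 / ((D₁ : ℂ) ^ 2 * (D₂ : ℂ) ^ 2)) *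
        ∑ b₁ ∈ Finset.range D₁, ∑ c₁ ∈ Finset.range D₁,
          ∑ b₂ ∈ Finset.range D₂, ∑ c₂ ∈ Finset.range D₂,
            if Nat.gcd (Nat.gcd b₁ c₁) D₁ = 1 ∧ Nat.gcd (Nat.gcd b₂ c₂) D₂ = 1 ∧
                (D₁ : ℤ) * c₂ + (b₁ : ℤ) * b₂ + (D₂ : ℤ) * c₁ ≡ 0 [ZMOD ((D₁ : ℤ) * D₂)] then
              (if (D₁ : ℤ) ∣ (r₁ * (b₁ : ℤ) - y₁) then (D₁ : ℂ) else 0) *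
              (if (D₁ : ℤ) ∣ (s₁ * ((YZ D₁ (b₁ : ℤ) (c₁ : ℤ)).1 * (D₂ : ℤ)
                  - (YZ D₁ (b₁ : ℤ) (c₁ : ℤ)).2 * (b₂ : ℤ)) - x₁) then (D₁ : ℂ) else 0) *
              (if (D₂ : ℤ) ∣ (s₂ * ((YZ D₂ (b₂ : ℤ) (c₂ : ℤ)).1 * (D₁ : ℤ)
                  - (YZ D₂ (b₂ : ℤ) (c₂ : ℤ)).2 * (b₁ : ℤ)) - y₂) then (D₂ : ℂ) else 0) *
              (if (D₂ : ℤ) ∣ (r₂ * (b₂ : ℤ) - x₂) then (D₂ : ℂ) else 0)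
            else 0 := by
    unfold Shat SKl
    congr 1
    simp only [Finset.sum_mul, ite_mul, zero_mul]
    rw [sum_comm5]
    refine Finset.sum_congr rfl fun b₁ _ => ?_
    rw [sum_comm5]
    refine Finset.sum_congr rfl fun c₁ _ => ?_
    rw [sum_comm5]
    refine Finset.sum_congr rfl fun b₂ _ => ?_
    rw [sum_comm5]
    refine Finset.sum_congr rfl fun c₂ _ => ?_
    by_cases hP : Nat.gcd (Nat.gcd b₁ c₁) D₁ = 1 ∧ Nat.gcd (Nat.gcd b₂ c₂) D₂ = 1 ∧
        (D₁ : ℤ) * c₂ + (b₁ : ℤ) * b₂ + (D₂ : ℤ) * c₁ ≡ 0 [ZMOD ((D₁ : ℤ) * D₂)]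
    · simp only [if_pos hP]
      set W₁ := (YZ D₁ (b₁ : ℤ) (c₁ : ℤ)).1 * (D₂ : ℤ) - (YZ D₁ (b₁ : ℤ) (c₁ : ℤ)).2 * (b₂ : ℤ)
        with hW₁
      set W₂ := (YZ D₂ (b₂ : ℤ) (c₂ : ℤ)).1 * (D₁ : ℤ) - (YZ D₂ (b₂ : ℤ) (c₂ : ℤ)).2 * (b₁ : ℤ)
        with hW₂
      have hsplit : ∀ n₁ m₁ n₂ m₂ : ℕ,
          e ((((n₁ : ℤ) * r₁ * (b₁ : ℤ) + (m₁ : ℤ) * s₁ * W₁ : ℤ) : ℝ) / (D₁ : ℝ)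
              + (((m₂ : ℤ) * r₂ * (b₂ : ℤ) + (n₂ : ℤ) * s₂ * W₂ : ℤ) : ℝ) / (D₂ : ℝ)) *
            e (-(((x₁ * (m₁ : ℤ) + y₁ * (n₁ : ℤ) : ℤ) : ℝ) / (D₁ : ℝ))
              - ((x₂ * (m₂ : ℤ) + y₂ * (n₂ : ℤ) : ℤ) : ℝ) / (D₂ : ℝ))
          = e ((((n₁ : ℤ) * (r₁ * (b₁ : ℤ) - y₁) : ℤ) : ℝ) / (D₁ : ℝ))
            * e ((((m₁ : ℤ) * (s₁ * W₁ - x₁) : ℤ) : ℝ) / (D₁ : ℝ))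
            * e ((((n₂ : ℤ) * (s₂ * W₂ - y₂) : ℤ) : ℝ) / (D₂ : ℝ))
            * e ((((m₂ : ℤ) * (r₂ * (b₂ : ℤ) - x₂) : ℤ) : ℝ) / (D₂ : ℝ)) := by
        intro n₁ m₁ n₂ m₂
        rw [← e_add, ← e_add, ← e_add, ← e_add]
        congr 1
        push_cast
        field_simp
        ring
      refine Eq.trans (Finset.sum_congr rfl fun n₁ _ => Finset.sum_congr rfl fun m₁ _ =>
        Finset.sum_congr rfl fun n₂ _ => Finset.sum_congr rfl fun m₂ _ =>
          hsplit n₁ m₁ n₂ m₂) ?_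
      refine Eq.trans (sum4_factor _ _ _ _ _ _ _ _) ?_
      rw [sum_e D₁ hD₁ (r₁ * (b₁ : ℤ) - y₁), sum_e D₁ hD₁ (s₁ * W₁ - x₁),
        sum_e D₂ hD₂ (s₂ * W₂ - y₂), sum_e D₂ hD₂ (r₂ * (b₂ : ℤ) - x₂)]
      split_ifs <;> ring
    · simp only [if_neg hP, Finset.sum_const_zero]
  -- Step 2: bound the absolute value by indicator sums
  have habs : ‖Shat r₁ s₁ r₂ s₂ x₁ y₁ x₂ y₂ D₁ D₂‖
      ≤ (1 / ((D₁ : ℝ) ^ 2 * (D₂ : ℝ) ^ 2)) *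
        ∑ b₁ ∈ Finset.range D₁, ∑ c₁ ∈ Finset.range D₁,
          ∑ b₂ ∈ Finset.range D₂, ∑ c₂ ∈ Finset.range D₂,
            if ((D₁ : ℤ) ∣ (r₁ * (b₁ : ℤ) - y₁)) ∧ ((D₂ : ℤ) ∣ (r₂ * (b₂ : ℤ) - x₂)) ∧
                ((D₁ : ℤ) * c₂ + (b₁ : ℤ) * b₂ + (D₂ : ℤ) * c₁ ≡ 0 [ZMOD ((D₁ : ℤ) * D₂)]) then
              ((D₁ : ℝ) ^ 2 * (D₂ : ℝ) ^ 2) else 0 := by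
    rw [claim1, norm_mul]
    have h1 : ‖(1 / ((D₁ : ℂ) ^ 2 * (D₂ : ℂ) ^ 2))‖
        = 1 / ((D₁ : ℝ) ^ 2 * (D₂ : ℝ) ^ 2) := by
      rw [norm_div, norm_one, norm_mul, norm_pow, norm_pow, Complex.norm_natCast,
        Complex.norm_natCast]
    rw [h1]
    refine mul_le_mul_of_nonneg_left ?_ (by positivity)
    refine (norm_sum_le _ _).trans (Finset.sum_le_sum fun b₁ _ => ?_)
    refine (norm_sum_le _ _).trans (Finset.sum_le_sum fun c₁ _ => ?_)
    refine (norm_sum_le _ _).trans (Finset.sum_le_sum fun b₂ _ => ?_)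
    refine (norm_sum_le _ _).trans (Finset.sum_le_sum fun c₂ _ => ?_)
    by_cases hP : Nat.gcd (Nat.gcd b₁ c₁) D₁ = 1 ∧ Nat.gcd (Nat.gcd b₂ c₂) D₂ = 1 ∧
        (D₁ : ℤ) * c₂ + (b₁ : ℤ) * b₂ + (D₂ : ℤ) * c₁ ≡ 0 [ZMOD ((D₁ : ℤ) * D₂)]
    · rw [if_pos hP]
      by_cases h₁ : (D₁ : ℤ) ∣ (r₁ * (b₁ : ℤ) - y₁)
      · by_cases h₂ : (D₂ : ℤ) ∣ (r₂ * (b₂ : ℤ) - x₂)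
        · have hQ : ((D₁ : ℤ) ∣ (r₁ * (b₁ : ℤ) - y₁)) ∧ ((D₂ : ℤ) ∣ (r₂ * (b₂ : ℤ) - x₂)) ∧
              ((D₁ : ℤ) * c₂ + (b₁ : ℤ) * b₂ + (D₂ : ℤ) * c₁ ≡ 0 [ZMOD ((D₁ : ℤ) * D₂)]) :=
            ⟨h₁, h₂, hP.2.2⟩
          rw [if_pos hQ, norm_mul, norm_mul, norm_mul]
          refine le_trans ?_ (le_of_eq (show (D₁ : ℝ) * (D₁ : ℝ) * (D₂ : ℝ) * (D₂ : ℝ)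
            = (D₁ : ℝ) ^ 2 * (D₂ : ℝ) ^ 2 by ring))
          exact mul_le_mul (mul_le_mul (mul_le_mul (absE _ _) (absE _ _)
            (norm_nonneg _) (by positivity)) (absE _ _)
            (norm_nonneg _) (by positivity)) (absE _ _)
            (norm_nonneg _) (by positivity)
        · have hnQ : ¬(((D₁ : ℤ) ∣ (r₁ * (b₁ : ℤ) - y₁)) ∧ ((D₂ : ℤ) ∣ (r₂ * (b₂ : ℤ) - x₂)) ∧
              ((D₁ : ℤ) * c₂ + (b₁ : ℤ) * b₂ + (D₂ : ℤ) * c₁ ≡ 0 [ZMOD ((D₁ : ℤ) * D₂)])) :=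
            fun hc => h₂ hc.2.1
          rw [if_neg hnQ, if_neg h₂]
          simp
      · have hnQ : ¬(((D₁ : ℤ) ∣ (r₁ * (b₁ : ℤ) - y₁)) ∧ ((D₂ : ℤ) ∣ (r₂ * (b₂ : ℤ) - x₂)) ∧
            ((D₁ : ℤ) * c₂ + (b₁ : ℤ) * b₂ + (D₂ : ℤ) * c₁ ≡ 0 [ZMOD ((D₁ : ℤ) * D₂)])) :=
          fun hc => h₁ hc.1
        rw [if_neg hnQ, if_neg h₁]
        simp
    · rw [if_neg hP, norm_zero]
      split_ifs <;> positivity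
  -- Step 3: simplify the constant
  have hKne : ((D₁ : ℝ) ^ 2 * (D₂ : ℝ) ^ 2) ≠ 0 := by positivity
  have hsum : (1 / ((D₁ : ℝ) ^ 2 * (D₂ : ℝ) ^ 2)) *
        (∑ b₁ ∈ Finset.range D₁, ∑ c₁ ∈ Finset.range D₁,
          ∑ b₂ ∈ Finset.range D₂, ∑ c₂ ∈ Finset.range D₂,
            if ((D₁ : ℤ) ∣ (r₁ * (b₁ : ℤ) - y₁)) ∧ ((D₂ : ℤ) ∣ (r₂ * (b₂ : ℤ) - x₂)) ∧
                ((D₁ : ℤ) * c₂ + (b₁ : ℤ) * b₂ + (D₂ : ℤ) * c₁ ≡ 0 [ZMOD ((D₁ : ℤ) * D₂)]) then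
              ((D₁ : ℝ) ^ 2 * (D₂ : ℝ) ^ 2) else 0)
      = ∑ b₁ ∈ Finset.range D₁, ∑ c₁ ∈ Finset.range D₁,
          ∑ b₂ ∈ Finset.range D₂, ∑ c₂ ∈ Finset.range D₂,
            if ((D₁ : ℤ) ∣ (r₁ * (b₁ : ℤ) - y₁)) ∧ ((D₂ : ℤ) ∣ (r₂ * (b₂ : ℤ) - x₂)) ∧
                ((D₁ : ℤ) * c₂ + (b₁ : ℤ) * b₂ + (D₂ : ℤ) * c₁ ≡ 0 [ZMOD ((D₁ : ℤ) * D₂)]) then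
              (1 : ℝ) else 0 := by
    simp only [Finset.mul_sum, mul_ite, mul_zero, one_div, inv_mul_cancel₀ hKne]
  -- Step 4: count solutions
  have key2 : ∀ b₁ b₂ : ℕ,
      (∑ c₁ ∈ Finset.range D₁, ∑ c₂ ∈ Finset.range D₂,
        if ((D₁ : ℤ) ∣ (r₁ * (b₁ : ℤ) - y₁)) ∧ ((D₂ : ℤ) ∣ (r₂ * (b₂ : ℤ) - x₂)) ∧
            ((D₁ : ℤ) * c₂ + (b₁ : ℤ) * b₂ + (D₂ : ℤ) * c₁ ≡ 0 [ZMOD ((D₁ : ℤ) * D₂)]) then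
          (1 : ℝ) else 0)
      ≤ (if (D₁ : ℤ) ∣ (r₁ * (b₁ : ℤ) - y₁) then (1 : ℝ) else 0) *
          ((if (D₂ : ℤ) ∣ (r₂ * (b₂ : ℤ) - x₂) then (1 : ℝ) else 0) * (Nat.gcd D₁ D₂ : ℝ)) := by
    intro b₁ b₂
    by_cases h₁ : (D₁ : ℤ) ∣ (r₁ * (b₁ : ℤ) - y₁)
    · by_cases h₂ : (D₂ : ℤ) ∣ (r₂ * (b₂ : ℤ) - x₂)
      · rw [if_pos h₁, if_pos h₂, one_mul, one_mul]
        calc (∑ c₁ ∈ Finset.range D₁, ∑ c₂ ∈ Finset.range D₂,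
              if ((D₁ : ℤ) ∣ (r₁ * (b₁ : ℤ) - y₁)) ∧ ((D₂ : ℤ) ∣ (r₂ * (b₂ : ℤ) - x₂)) ∧
                  ((D₁ : ℤ) * c₂ + (b₁ : ℤ) * b₂ + (D₂ : ℤ) * c₁ ≡ 0 [ZMOD ((D₁ : ℤ) * D₂)]) then
                (1 : ℝ) else 0)
            ≤ ∑ c₁ ∈ Finset.range D₁, ∑ c₂ ∈ Finset.range D₂,
              if ((D₁ : ℤ) * c₂ + (b₁ : ℤ) * b₂ + (D₂ : ℤ) * c₁ ≡ 0 [ZMOD ((D₁ : ℤ) * D₂)]) then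
                (1 : ℝ) else 0 := by
              refine Finset.sum_le_sum fun c₁ _ => Finset.sum_le_sum fun c₂ _ => ?_
              by_cases h3 : ((D₁ : ℤ) * c₂ + (b₁ : ℤ) * b₂ + (D₂ : ℤ) * c₁ ≡ 0 [ZMOD ((D₁ : ℤ) * D₂)])
              · simp [h3, h₁, h₂]
              · simp [h3]
          _ = (((Finset.range D₁ ×ˢ Finset.range D₂).filter
                (fun p => (D₁ : ℤ) * (p.2 : ℤ) + (b₁ : ℤ) * (b₂ : ℤ) + (D₂ : ℤ) * (p.1 : ℤ)
                  ≡ 0 [ZMOD ((D₁ : ℤ) * (D₂ : ℤ))])).card : ℝ) := by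
              rw [← Finset.sum_product', Finset.sum_boole]
          _ ≤ (Nat.gcd D₁ D₂ : ℝ) := by
              exact_mod_cast card_pair D₁ D₂ hD₁ hD₂ ((b₁ : ℤ) * (b₂ : ℤ))
      · rw [if_neg h₂]
        have hz : (∑ c₁ ∈ Finset.range D₁, ∑ c₂ ∈ Finset.range D₂,
            if ((D₁ : ℤ) ∣ (r₁ * (b₁ : ℤ) - y₁)) ∧ ((D₂ : ℤ) ∣ (r₂ * (b₂ : ℤ) - x₂)) ∧
                ((D₁ : ℤ) * c₂ + (b₁ : ℤ) * b₂ + (D₂ : ℤ) * c₁ ≡ 0 [ZMOD ((D₁ : ℤ) * D₂)]) then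
              (1 : ℝ) else 0) = 0 :=
          Finset.sum_eq_zero fun c₁ _ => Finset.sum_eq_zero fun c₂ _ =>
            if_neg (fun hc => h₂ hc.2.1)
        rw [hz]
        simp
    · rw [if_neg h₁]
      have hz : (∑ c₁ ∈ Finset.range D₁, ∑ c₂ ∈ Finset.range D₂,
          if ((D₁ : ℤ) ∣ (r₁ * (b₁ : ℤ) - y₁)) ∧ ((D₂ : ℤ) ∣ (r₂ * (b₂ : ℤ) - x₂)) ∧
              ((D₁ : ℤ) * c₂ + (b₁ : ℤ) * b₂ + (D₂ : ℤ) * c₁ ≡ 0 [ZMOD ((D₁ : ℤ) * D₂)]) then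
            (1 : ℝ) else 0) = 0 :=
        Finset.sum_eq_zero fun c₁ _ => Finset.sum_eq_zero fun c₂ _ =>
          if_neg (fun hc => h₁ hc.1)
      rw [hz]
      simp
  have hcount : (∑ b₁ ∈ Finset.range D₁, ∑ c₁ ∈ Finset.range D₁,
        ∑ b₂ ∈ Finset.range D₂, ∑ c₂ ∈ Finset.range D₂,
          if ((D₁ : ℤ) ∣ (r₁ * (b₁ : ℤ) - y₁)) ∧ ((D₂ : ℤ) ∣ (r₂ * (b₂ : ℤ) - x₂)) ∧
              ((D₁ : ℤ) * c₂ + (b₁ : ℤ) * b₂ + (D₂ : ℤ) * c₁ ≡ 0 [ZMOD ((D₁ : ℤ) * D₂)]) then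
            (1 : ℝ) else 0)
      ≤ (Int.gcd r₁ (D₁ : ℤ) : ℝ) * (Int.gcd r₂ (D₂ : ℤ) : ℝ) * (Nat.gcd D₁ D₂ : ℝ) := by
    have hswap : (∑ b₁ ∈ Finset.range D₁, ∑ c₁ ∈ Finset.range D₁,
          ∑ b₂ ∈ Finset.range D₂, ∑ c₂ ∈ Finset.range D₂,
            if ((D₁ : ℤ) ∣ (r₁ * (b₁ : ℤ) - y₁)) ∧ ((D₂ : ℤ) ∣ (r₂ * (b₂ : ℤ) - x₂)) ∧
                ((D₁ : ℤ) * c₂ + (b₁ : ℤ) * b₂ + (D₂ : ℤ) * c₁ ≡ 0 [ZMOD ((D₁ : ℤ) * D₂)]) then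
              (1 : ℝ) else 0)
        = ∑ b₁ ∈ Finset.range D₁, ∑ b₂ ∈ Finset.range D₂,
            ∑ c₁ ∈ Finset.range D₁, ∑ c₂ ∈ Finset.range D₂,
              if ((D₁ : ℤ) ∣ (r₁ * (b₁ : ℤ) - y₁)) ∧ ((D₂ : ℤ) ∣ (r₂ * (b₂ : ℤ) - x₂)) ∧
                  ((D₁ : ℤ) * c₂ + (b₁ : ℤ) * b₂ + (D₂ : ℤ) * c₁ ≡ 0 [ZMOD ((D₁ : ℤ) * D₂)]) then
                (1 : ℝ) else 0 :=
      Finset.sum_congr rfl fun b₁ _ => Finset.sum_comm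
    rw [hswap]
    calc (∑ b₁ ∈ Finset.range D₁, ∑ b₂ ∈ Finset.range D₂,
          ∑ c₁ ∈ Finset.range D₁, ∑ c₂ ∈ Finset.range D₂,
            if ((D₁ : ℤ) ∣ (r₁ * (b₁ : ℤ) - y₁)) ∧ ((D₂ : ℤ) ∣ (r₂ * (b₂ : ℤ) - x₂)) ∧
                ((D₁ : ℤ) * c₂ + (b₁ : ℤ) * b₂ + (D₂ : ℤ) * c₁ ≡ 0 [ZMOD ((D₁ : ℤ) * D₂)]) then
              (1 : ℝ) else 0)
        ≤ ∑ b₁ ∈ Finset.range D₁, ∑ b₂ ∈ Finset.range D₂,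
            (if (D₁ : ℤ) ∣ (r₁ * (b₁ : ℤ) - y₁) then (1 : ℝ) else 0) *
              ((if (D₂ : ℤ) ∣ (r₂ * (b₂ : ℤ) - x₂) then (1 : ℝ) else 0) * (Nat.gcd D₁ D₂ : ℝ)) :=
          Finset.sum_le_sum fun b₁ _ => Finset.sum_le_sum fun b₂ _ => key2 b₁ b₂
      _ = (∑ b₁ ∈ Finset.range D₁, if (D₁ : ℤ) ∣ (r₁ * (b₁ : ℤ) - y₁) then (1 : ℝ) else 0) *
            ((∑ b₂ ∈ Finset.range D₂, if (D₂ : ℤ) ∣ (r₂ * (b₂ : ℤ) - x₂) then (1 : ℝ) else 0) *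
              (Nat.gcd D₁ D₂ : ℝ)) := by
          rw [show (∑ b₁ ∈ Finset.range D₁, ∑ b₂ ∈ Finset.range D₂,
              (if (D₁ : ℤ) ∣ (r₁ * (b₁ : ℤ) - y₁) then (1 : ℝ) else 0) *
                ((if (D₂ : ℤ) ∣ (r₂ * (b₂ : ℤ) - x₂) then (1 : ℝ) else 0) * (Nat.gcd D₁ D₂ : ℝ)))
              = ∑ b₁ ∈ Finset.range D₁,
                (if (D₁ : ℤ) ∣ (r₁ * (b₁ : ℤ) - y₁) then (1 : ℝ) else 0) *
                  (∑ b₂ ∈ Finset.range D₂,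
                    (if (D₂ : ℤ) ∣ (r₂ * (b₂ : ℤ) - x₂) then (1 : ℝ) else 0) * (Nat.gcd D₁ D₂ : ℝ))
              from Finset.sum_congr rfl fun b₁ _ => (Finset.mul_sum _ _ _).symm]
          rw [← Finset.sum_mul]
          rw [show (∑ b₂ ∈ Finset.range D₂,
              (if (D₂ : ℤ) ∣ (r₂ * (b₂ : ℤ) - x₂) then (1 : ℝ) else 0) * (Nat.gcd D₁ D₂ : ℝ))
              = (∑ b₂ ∈ Finset.range D₂, if (D₂ : ℤ) ∣ (r₂ * (b₂ : ℤ) - x₂) then (1 : ℝ) else 0) *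
                (Nat.gcd D₁ D₂ : ℝ) from (Finset.sum_mul _ _ _).symm]
      _ ≤ (Int.gcd r₁ (D₁ : ℤ) : ℝ) * ((Int.gcd r₂ (D₂ : ℤ) : ℝ) * (Nat.gcd D₁ D₂ : ℝ)) := by
          have e₁ : (∑ b₁ ∈ Finset.range D₁, if (D₁ : ℤ) ∣ (r₁ * (b₁ : ℤ) - y₁) then (1 : ℝ) else 0)
              ≤ (Int.gcd r₁ (D₁ : ℤ) : ℝ) := by
            rw [Finset.sum_boole]
            exact_mod_cast card_lin D₁ hD₁ r₁ y₁ hr₁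
          have e₂ : (∑ b₂ ∈ Finset.range D₂, if (D₂ : ℤ) ∣ (r₂ * (b₂ : ℤ) - x₂) then (1 : ℝ) else 0)
              ≤ (Int.gcd r₂ (D₂ : ℤ) : ℝ) := by
            rw [Finset.sum_boole]
            exact_mod_cast card_lin D₂ hD₂ r₂ x₂ hr₂
          have nn₁ : (0 : ℝ) ≤ ∑ b₂ ∈ Finset.range D₂,
              if (D₂ : ℤ) ∣ (r₂ * (b₂ : ℤ) - x₂) then (1 : ℝ) else 0 :=
            Finset.sum_nonneg fun b₂ _ => by positivity
          refine mul_le_mul e₁ ?_ (by positivity) (by positivity)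
          exact mul_le_mul e₂ le_rfl (by positivity) (by positivity)
      _ = (Int.gcd r₁ (D₁ : ℤ) : ℝ) * (Int.gcd r₂ (D₂ : ℤ) : ℝ) * (Nat.gcd D₁ D₂ : ℝ) := by ring
  calc ‖Shat r₁ s₁ r₂ s₂ x₁ y₁ x₂ y₂ D₁ D₂‖ ≤ _ := habs
    _ = _ := hsum
    _ ≤ _ := hcount
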